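/- Assume there is a constant J ∈ [0,∞) with ‖ξ(t)‖₋ ≤ J e^{−2Bt} for all t ∈ [0,∞). Let f₀ ∈ F, set F# := ‖f₀‖ + NJ, suppose 4KN·F# ≤ 1, and define φ_ap(t) := e^{tA}f₀ + ∫₀^t e^{(t−s)A}ξ(s) ds (the flow of the linear equation). Then the global solution φ : [0,∞) → F of VP(f₀) satisfies ‖φ(t) − φ_ap(t)‖ ≤ KN·F#²·𝒳̂(4KN·F#)·e^{−Bt} for all t ∈ [0,∞), where 𝒳̂ : [0,1] → [1,4] is defined by 𝒳̂(z) := (1 − z/2 − √(1−z))/(z²/8) for z ∈ (0,1] and 𝒳̂(0) := 1. -/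

import Mathlib

open Set MeasureTheory

set_option linter.unusedSectionVars false
set_option linter.unusedVariables false

open Set MeasureTheory

namespace Stmt9

lemma ae_ne_pt (t : ℝ) : ∀ᵐ s : ℝ, s ≠ t := by
  have h : {s : ℝ | ¬ s ≠ t} = {t} := by ext s; simp
  rw [MeasureTheory.ae_iff, h]
  exact Real.volume_singleton

lemma mu_integrableOn {μm : ℝ → ℝ} (hμm_cont : ContinuousOn μm (Ioi (0:ℝ)))
    (hμm_pos : ∀ t > (0:ℝ), 0 < μm t) {σ C δ : ℝ} (hσ0 : 0 < σ) (hδ : 0 < δ)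
    (hC : ∀ t ∈ Ioo (0:ℝ) δ, μm t ≤ C / t ^ (1 - σ)) (T : ℝ) :
    IntegrableOn μm (Ioc 0 T) := by
  rcases le_or_gt T 0 with hT | hT
  · rw [Ioc_eq_empty (by exact fun h => absurd hT (not_le.2 h))]
    exact integrableOn_empty
  · set η := min (δ/2) T with hηdef
    have hη0 : 0 < η := lt_min (by linarith) hT
    have h1 : IntegrableOn μm (Ioc 0 η) := by
      have hmeas : AEStronglyMeasurable μm (volume.restrict (Ioc 0 η)) :=
        (hμm_cont.mono (fun x hx => hx.1)).aestronglyMeasurable measurableSet_Ioc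
      have hint : IntegrableOn (fun u : ℝ => C * u ^ (σ - 1)) (Ioc 0 η) := by
        have h := (intervalIntegral.intervalIntegrable_rpow' (a := 0) (b := η)
          (r := σ - 1) (by linarith)).const_mul C
        exact (intervalIntegrable_iff_integrableOn_Ioc_of_le hη0.le).1 h
      refine Integrable.mono' hint hmeas ?_
      filter_upwards [ae_restrict_mem measurableSet_Ioc] with u hu
      have hu0 : 0 < u := hu.1
      have huδ : u < δ := lt_of_le_of_lt hu.2 (lt_of_le_of_lt (min_le_left _ _) (by linarith))
      have h2 := hC u ⟨hu0, huδ⟩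
      rw [Real.norm_eq_abs, abs_of_pos (hμm_pos u hu0)]
      calc μm u ≤ C / u ^ (1 - σ) := h2
        _ = C * u ^ (σ - 1) := by
            rw [div_eq_mul_inv, ← Real.rpow_neg hu0.le]
            norm_num
    have h2 : IntegrableOn μm (Ioc η T) := by
      have : IntegrableOn μm (Icc η T) :=
        (hμm_cont.mono (fun x hx => lt_of_lt_of_le hη0 hx.1)).integrableOn_Icc
      exact this.mono_set Ioc_subset_Icc_self
    have := h1.union h2
    rwa [Ioc_union_Ioc_eq_Ioc hη0.le (min_le_right _ _)] at this

section Mu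
variable {μm : ℝ → ℝ} (hμm_pos : ∀ t > (0:ℝ), 0 < μm t)
  (hμmInt : ∀ T : ℝ, IntegrableOn μm (Ioc 0 T))

include hμm_pos in
lemma mu_int_nonneg {a b : ℝ} (ha : 0 ≤ a) (hab : a ≤ b) :
    0 ≤ ∫ u in a..b, μm u := by
  refine intervalIntegral.integral_nonneg_of_ae_restrict hab ?_
  filter_upwards [ae_restrict_mem measurableSet_Icc, ae_restrict_of_ae (ae_ne_pt 0)]
    with u hu hu0
  exact (hμm_pos u (lt_of_le_of_ne (le_trans ha hu.1) (Ne.symm hu0))).le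

include hμm_pos hμmInt in
lemma mu_prim_mono {a b : ℝ} (ha : 0 ≤ a) (hab : a ≤ b) :
    (∫ u in (0:ℝ)..a, μm u) ≤ ∫ u in (0:ℝ)..b, μm u := by
  have h1 : IntervalIntegrable μm volume 0 a :=
    (intervalIntegrable_iff_integrableOn_Ioc_of_le ha).2 ((hμmInt a))
  have h2 : IntervalIntegrable μm volume a b := by
    refine (intervalIntegrable_iff_integrableOn_Ioc_of_le hab).2 ?_
    exact (hμmInt b).mono_set (Ioc_subset_Ioc ha le_rfl)
  have := intervalIntegral.integral_add_adjacent_intervals h1 h2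
  have hnn : 0 ≤ ∫ u in a..b, μm u := mu_int_nonneg hμm_pos ha hab
  linarith

include hμmInt in
lemma mu_prim_cont (T : ℝ) :
    ContinuousOn (fun x => ∫ u in (0:ℝ)..x, μm u) (Icc 0 T) := by
  have h : IntegrableOn μm (Icc 0 T) := by
    rw [integrableOn_Icc_iff_integrableOn_Ioc]; exact hμmInt T
  refine (intervalIntegral.continuousOn_primitive h).congr ?_
  intro x hx
  show (∫ u in (0:ℝ)..x, μm u) = ∫ t in Ioc 0 x, μm t
  rw [intervalIntegral.integral_of_le hx.1]

end Mu
section Kernel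
variable {F Fm : Type*}
  [NormedAddCommGroup F] [NormedSpace ℝ F] [CompleteSpace F]
  [NormedAddCommGroup Fm] [NormedSpace ℝ Fm] [CompleteSpace Fm]
  {W : ℝ → Fm → F} {μm : ℝ → ℝ} {B : ℝ}
  (hWcont : ContinuousOn (fun p : Fm × ℝ => W p.2 p.1) (univ ×ˢ Ioi (0:ℝ)))
  (hB : 0 ≤ B)
  (hμm_pos : ∀ t > (0:ℝ), 0 < μm t)
  (hμm_bd : ∀ t > (0:ℝ), ∀ f : Fm, ‖W t f‖ ≤ μm t * Real.exp (-(B * t)) * ‖f‖)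
  (hμmInt : ∀ T : ℝ, IntegrableOn μm (Ioc 0 T))

include hWcont in
lemma kernel_contOn {g : ℝ → Fm} {t : ℝ} (hg : ContinuousOn g (Icc 0 t)) :
    ContinuousOn (fun s => W (t - s) (g s)) (Ico 0 t) := by
  have h1 : ContinuousOn (fun s : ℝ => ((g s, t - s) : Fm × ℝ)) (Ico 0 t) :=
    (hg.mono Ico_subset_Icc_self).prodMk ((continuous_const.sub continuous_id).continuousOn)
  exact hWcont.comp h1 (fun s hs => ⟨mem_univ _, by simp [sub_pos, hs.2]⟩)

include hμm_pos hμmInt in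
lemma mu_ker_intble {r t : ℝ} (hr : 0 ≤ r) (hrt : r ≤ t) :
    IntervalIntegrable (fun s => μm (t - s)) volume r t := by
  have h0 : IntervalIntegrable μm volume 0 (t - r) :=
    (intervalIntegrable_iff_integrableOn_Ioc_of_le (by linarith)).2 (hμmInt (t - r))
  have := h0.comp_sub_left t
  simp only [sub_zero, sub_sub_cancel] at this
  exact this.symm

include hWcont hB hμm_pos hμm_bd hμmInt in
lemma kernel_intble {g : ℝ → Fm} {t c : ℝ} (ht : 0 ≤ t)
    (hg : ContinuousOn g (Icc 0 t)) (hgb : ∀ s ∈ Icc 0 t, ‖g s‖ ≤ c) :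
    IntervalIntegrable (fun s => W (t - s) (g s)) volume 0 t := by
  rcases eq_or_lt_of_le ht with rfl | ht0
  · rw [intervalIntegrable_iff]; simp
  rw [intervalIntegrable_iff_integrableOn_Ioo_of_le ht]
  have hmeas : AEStronglyMeasurable (fun s => W (t - s) (g s)) (volume.restrict (Ioo 0 t)) :=
    ((kernel_contOn hWcont hg).mono Ioo_subset_Ico_self).aestronglyMeasurable measurableSet_Ioo
  have hμint : IntegrableOn (fun s => μm (t - s) * c) (Ioo 0 t) := by
    have := ((mu_ker_intble hμm_pos hμmInt le_rfl ht).mul_const c)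
    exact (intervalIntegrable_iff_integrableOn_Ioo_of_le ht).1 this
  refine Integrable.mono' hμint hmeas ?_
  filter_upwards [ae_restrict_mem measurableSet_Ioo] with s hs
  have hts : 0 < t - s := by linarith [hs.2]
  have h1 := hμm_bd (t - s) hts (g s)
  have h2 := hgb s ⟨hs.1.le, hs.2.le⟩
  have h3 : Real.exp (-(B * (t - s))) ≤ 1 := by
    rw [Real.exp_le_one_iff]; nlinarith
  have h4 := (hμm_pos (t - s) hts).le
  have h5 := Real.exp_pos (-(B * (t - s)))
  have h6 := norm_nonneg (g s)
  have hc0 : 0 ≤ c := le_trans h6 h2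
  calc ‖W (t - s) (g s)‖ ≤ μm (t - s) * Real.exp (-(B * (t - s))) * ‖g s‖ := h1
    _ ≤ μm (t - s) * Real.exp (-(B * (t - s))) * c :=
        mul_le_mul_of_nonneg_left h2 (mul_nonneg h4 h5.le)
    _ ≤ μm (t - s) * c := by nlinarith [mul_le_mul_of_nonneg_right (mul_le_mul_of_nonneg_left h3 h4) hc0]

include hB hμm_pos hμm_bd hμmInt in
lemma kernel_tail {g : ℝ → Fm} {r t c : ℝ} (hr : 0 ≤ r) (hrt : r ≤ t) (hc : 0 ≤ c)
    (hgb : ∀ s ∈ Icc 0 t, ‖g s‖ ≤ c) :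
    ‖∫ s in r..t, W (t - s) (g s)‖ ≤ c * ∫ u in (0:ℝ)..(t - r), μm u := by
  have hG : IntervalIntegrable (fun s => c * μm (t - s)) volume r t :=
    (mu_ker_intble hμm_pos hμmInt hr hrt).const_mul c
  have hbound : ∀ᵐ s ∂volume.restrict (uIoc r t), ‖W (t - s) (g s)‖ ≤ c * μm (t - s) := by
    rw [uIoc_of_le hrt]
    filter_upwards [ae_restrict_mem measurableSet_Ioc, ae_restrict_of_ae (ae_ne_pt t)]
      with s hs hst
    have hst' : s < t := lt_of_le_of_ne hs.2 hst
    have hts : 0 < t - s := by linarith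
    have h1 := hμm_bd (t - s) hts (g s)
    have h2 := hgb s ⟨le_trans hr hs.1.le, hs.2⟩
    have h3 : Real.exp (-(B * (t - s))) ≤ 1 := by
      rw [Real.exp_le_one_iff]; nlinarith
    have h4 := (hμm_pos (t - s) hts).le
    have h5 := Real.exp_pos (-(B * (t - s)))
    have h6 := norm_nonneg (g s)
    calc ‖W (t - s) (g s)‖ ≤ μm (t - s) * Real.exp (-(B * (t - s))) * ‖g s‖ := h1
      _ ≤ μm (t - s) * Real.exp (-(B * (t - s))) * c :=
          mul_le_mul_of_nonneg_left h2 (mul_nonneg h4 h5.le)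
      _ ≤ c * μm (t - s) := by nlinarith [mul_le_mul_of_nonneg_right (mul_le_mul_of_nonneg_left h3 h4) hc]
  have h := intervalIntegral.norm_integral_le_abs_of_norm_le hbound hG
  have heq : (∫ s in r..t, c * μm (t - s)) = c * ∫ u in (0:ℝ)..(t - r), μm u := by
    rw [intervalIntegral.integral_const_mul]
    congr 1
    have := intervalIntegral.integral_comp_sub_left (a := r) (b := t) μm t
    rw [sub_self] at this
    exact this
  rw [heq] at h
  refine le_trans h (le_of_eq (abs_of_nonneg ?_))
  exact mul_nonneg hc (mu_int_nonneg hμm_pos le_rfl (by linarith))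

include hB hμm_pos hμm_bd hμmInt in
lemma kernel_norm {g : ℝ → Fm} {t c Nc : ℝ} (ht : 0 ≤ t) (hc : 0 ≤ c)
    (hgb : ∀ s ∈ Icc 0 t, ‖g s‖ ≤ c * Real.exp (-(2 * B * s)))
    (hNt : (∫ s in (0:ℝ)..t, μm (t - s) * Real.exp (-(B * s))) ≤ Nc) :
    ‖∫ s in (0:ℝ)..t, W (t - s) (g s)‖ ≤ c * Nc * Real.exp (-(B * t)) := by
  have hinner : IntervalIntegrable (fun s => μm (t - s) * Real.exp (-(B * s))) volume 0 t :=
    (mu_ker_intble hμm_pos hμmInt le_rfl ht).mul_continuousOn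
      ((Real.continuous_exp.comp (continuous_const.mul continuous_id).neg).continuousOn)
  have hG : IntervalIntegrable
      (fun s => c * Real.exp (-(B * t)) * (μm (t - s) * Real.exp (-(B * s)))) volume 0 t :=
    hinner.const_mul _
  have hbound : ∀ᵐ s ∂volume.restrict (uIoc 0 t),
      ‖W (t - s) (g s)‖ ≤ c * Real.exp (-(B * t)) * (μm (t - s) * Real.exp (-(B * s))) := by
    rw [uIoc_of_le ht]
    filter_upwards [ae_restrict_mem measurableSet_Ioc, ae_restrict_of_ae (ae_ne_pt t)]
      with s hs hst
    have hst' : s < t := lt_of_le_of_ne hs.2 hst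
    have hts : 0 < t - s := by linarith
    have h1 := hμm_bd (t - s) hts (g s)
    have h2 := hgb s ⟨hs.1.le, hs.2⟩
    have h4 := (hμm_pos (t - s) hts).le
    have h5 := (Real.exp_pos (-(B * (t - s)))).le
    have hexp : Real.exp (-(B * (t - s))) * Real.exp (-(2 * B * s))
        = Real.exp (-(B * t)) * Real.exp (-(B * s)) := by
      rw [← Real.exp_add, ← Real.exp_add]; congr 1; ring
    calc ‖W (t - s) (g s)‖ ≤ μm (t - s) * Real.exp (-(B * (t - s))) * ‖g s‖ := h1
      _ ≤ μm (t - s) * Real.exp (-(B * (t - s))) * (c * Real.exp (-(2 * B * s))) := by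
          exact mul_le_mul_of_nonneg_left h2 (mul_nonneg h4 h5)
      _ = c * Real.exp (-(B * t)) * (μm (t - s) * Real.exp (-(B * s))) := by
          linear_combination (μm (t - s) * c) * hexp
  have h := intervalIntegral.norm_integral_le_abs_of_norm_le hbound hG
  have hinn_nonneg : 0 ≤ ∫ s in (0:ℝ)..t, μm (t - s) * Real.exp (-(B * s)) := by
    refine intervalIntegral.integral_nonneg_of_ae_restrict ht ?_
    filter_upwards [ae_restrict_mem measurableSet_Icc, ae_restrict_of_ae (ae_ne_pt t)]
      with s hs hst
    have hts : 0 < t - s := lt_of_le_of_ne (by linarith [hs.2]) (by intro h; exact hst (by linarith))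
    exact mul_nonneg (hμm_pos _ hts).le (Real.exp_pos _).le
  have hE : 0 ≤ c * Real.exp (-(B * t)) := mul_nonneg hc (Real.exp_pos _).le
  have heq : (∫ s in (0:ℝ)..t, c * Real.exp (-(B * t)) * (μm (t - s) * Real.exp (-(B * s))))
      = c * Real.exp (-(B * t)) * ∫ s in (0:ℝ)..t, μm (t - s) * Real.exp (-(B * s)) := by
    rw [intervalIntegral.integral_const_mul]
  rw [heq, abs_of_nonneg (mul_nonneg hE hinn_nonneg)] at h
  calc ‖∫ s in (0:ℝ)..t, W (t - s) (g s)‖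
      ≤ c * Real.exp (-(B * t)) * ∫ s in (0:ℝ)..t, μm (t - s) * Real.exp (-(B * s)) := h
    _ ≤ c * Real.exp (-(B * t)) * Nc := mul_le_mul_of_nonneg_left hNt hE
    _ = c * Nc * Real.exp (-(B * t)) := by ring

end Kernel

lemma norm_add_sub_add_le {G : Type*} [SeminormedAddCommGroup G] (u v a b : G) :
    ‖u + a - (v + b)‖ ≤ ‖u - v‖ + ‖a‖ + ‖b‖ := by
  have h : u + a - (v + b) = u - v + a + -b := by abel
  rw [h]
  calc ‖u - v + a + -b‖ ≤ ‖u - v + a‖ + ‖-b‖ := norm_add_le _ _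
    _ ≤ ‖u - v‖ + ‖a‖ + ‖b‖ := by
        rw [norm_neg]; exact add_le_add (norm_add_le _ _) le_rfl

section Conv
variable {F Fm : Type*}
  [NormedAddCommGroup F] [NormedSpace ℝ F] [CompleteSpace F]
  [NormedAddCommGroup Fm] [NormedSpace ℝ Fm] [CompleteSpace Fm]
  {ι : F →L[ℝ] Fm} (hι_inj : Function.Injective ι)
  {U : ℝ → Fm →L[ℝ] Fm}
  (hUsem : ∀ s ≥ (0:ℝ), ∀ t ≥ (0:ℝ), U (s + t) = (U s).comp (U t))
  {V : ℝ → F → F}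
  (hV : ∀ t ≥ (0:ℝ), ∀ x : F, ι (V t x) = U t (ι x))
  (hVcont : ContinuousOn (fun p : F × ℝ => V p.2 p.1) (univ ×ˢ Ici (0:ℝ)))
  {W : ℝ → Fm → F}
  (hW : ∀ t > (0:ℝ), ∀ f : Fm, ι (W t f) = U t f)
  (hWcont : ContinuousOn (fun p : Fm × ℝ => W p.2 p.1) (univ ×ˢ Ioi (0:ℝ)))
  {μm : ℝ → ℝ} {B : ℝ}
  (hB : 0 ≤ B)
  (hu_bd : ∀ t ≥ (0:ℝ), ∀ x : F, ‖V t x‖ ≤ Real.exp (-(B * t)) * ‖x‖)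
  (hμm_pos : ∀ t > (0:ℝ), 0 < μm t)
  (hμm_bd : ∀ t > (0:ℝ), ∀ f : Fm, ‖W t f‖ ≤ μm t * Real.exp (-(B * t)) * ‖f‖)
  (hμmInt : ∀ T : ℝ, IntegrableOn μm (Ioc 0 T))

include hι_inj hV hu_bd in
lemma exists_Vc : ∃ Vc : ℝ → F →L[ℝ] F, ∀ t ≥ (0:ℝ), ∀ x, Vc t x = V t x := by
  have key : ∀ t : ℝ, 0 ≤ t → ∃ L : F →L[ℝ] F, ∀ x, L x = V t x := by
    intro t ht
    have hadd : ∀ x y, V t (x + y) = V t x + V t y := by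
      intro x y
      apply hι_inj
      have e1 : ι (V t (x + y)) = U t (ι x) + U t (ι y) := by
        rw [hV t ht, _root_.map_add, _root_.map_add]
      have e2 : ι (V t x + V t y) = U t (ι x) + U t (ι y) := by
        rw [_root_.map_add, hV t ht, hV t ht]
      rw [e1, e2]
    have hsmul : ∀ (a : ℝ) (x : F), V t (a • x) = a • V t x := by
      intro a x
      apply hι_inj
      have e1 : ι (V t (a • x)) = a • U t (ι x) := by
        rw [hV t ht, _root_.map_smul, _root_.map_smul]
      have e2 : ι (a • V t x) = a • U t (ι x) := by
        rw [_root_.map_smul, hV t ht]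
      rw [e1, e2]
    refine ⟨LinearMap.mkContinuous
      { toFun := V t, map_add' := hadd, map_smul' := hsmul }
      (Real.exp (-(B * t))) (fun x => hu_bd t ht x), fun x => rfl⟩
  choose L hL using key
  exact ⟨fun t => if ht : 0 ≤ t then L t ht else 0,
    fun t ht x => by
      have h0 : (0:ℝ) ≤ t := ht
      show (if h : (0:ℝ) ≤ t then L t h else 0) x = V t x
      rw [dif_pos h0]
      exact hL t h0 x⟩

include hι_inj hUsem hV hW hWcont hB hμm_pos hμm_bd hμmInt in
lemma conv_decomp {Vc : ℝ → F →L[ℝ] F} (hVc : ∀ t ≥ (0:ℝ), ∀ x, Vc t x = V t x)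
    {g : ℝ → Fm} {c r t : ℝ} (hg : ContinuousOn g (Ici 0)) (hgb : ∀ s ≥ (0:ℝ), ‖g s‖ ≤ c)
    (hr : 0 ≤ r) (hrt : r < t) :
    (∫ s in (0:ℝ)..t, W (t - s) (g s))
      = Vc (t - r) (∫ s in (0:ℝ)..r, W (r - s) (g s)) + ∫ s in r..t, W (t - s) (g s) := by
  have ht : (0:ℝ) ≤ t := le_trans hr hrt.le
  have hgt : ContinuousOn g (Icc 0 t) := hg.mono (fun x hx => hx.1)
  have hgbt : ∀ s ∈ Icc (0:ℝ) t, ‖g s‖ ≤ c := fun s hs => hgb s hs.1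
  have hInt_t : IntervalIntegrable (fun s => W (t - s) (g s)) volume 0 t :=
    kernel_intble hWcont hB hμm_pos hμm_bd hμmInt ht hgt hgbt
  have hsub1 : uIcc (0:ℝ) r ⊆ uIcc 0 t := by
    rw [uIcc_of_le hr, uIcc_of_le ht]; exact Icc_subset_Icc le_rfl hrt.le
  have hsub2 : uIcc r t ⊆ uIcc 0 t := by
    rw [uIcc_of_le hrt.le, uIcc_of_le ht]; exact Icc_subset_Icc hr le_rfl
  have h1 := hInt_t.mono_set hsub1
  have h2 := hInt_t.mono_set hsub2
  have hsplit := intervalIntegral.integral_add_adjacent_intervals h1 h2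
  have hInt_r : IntervalIntegrable (fun s => W (r - s) (g s)) volume 0 r :=
    kernel_intble hWcont hB hμm_pos hμm_bd hμmInt hr (hg.mono (fun x hx => hx.1))
      (fun s hs => hgb s hs.1)
  have htr : (0:ℝ) ≤ t - r := by linarith
  have hcongr : (∫ s in (0:ℝ)..r, W (t - s) (g s))
      = ∫ s in (0:ℝ)..r, Vc (t - r) (W (r - s) (g s)) := by
    apply intervalIntegral.integral_congr_ae
    filter_upwards [ae_ne_pt r] with s hsr hmem
    rw [uIoc_of_le hr] at hmem
    have hs0 : 0 < s := hmem.1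
    have hsr' : s < r := lt_of_le_of_ne hmem.2 hsr
    rw [hVc (t - r) htr]
    apply hι_inj
    rw [hV (t - r) htr, hW (r - s) (by linarith), hW (t - s) (by linarith)]
    have hU := hUsem (t - r) htr (r - s) (by linarith)
    have heq : (t - r) + (r - s) = t - s := by ring
    rw [heq] at hU
    rw [hU]
    rfl
  have hpull : (∫ s in (0:ℝ)..r, Vc (t - r) (W (r - s) (g s)))
      = Vc (t - r) (∫ s in (0:ℝ)..r, W (r - s) (g s)) :=
    ContinuousLinearMap.intervalIntegral_comp_comm _ hInt_r
  rw [← hsplit, hcongr, hpull]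

include hι_inj hUsem hV hVcont hW hWcont hB hu_bd hμm_pos hμm_bd hμmInt in
lemma conv_contOn {g : ℝ → Fm} {c : ℝ}
    (hg : ContinuousOn g (Ici 0)) (hgb : ∀ s ≥ (0:ℝ), ‖g s‖ ≤ c) :
    ContinuousOn (fun t => ∫ s in (0:ℝ)..t, W (t - s) (g s)) (Ici 0) := by
  obtain ⟨Vc, hVc⟩ := exists_Vc hι_inj hV hu_bd
  have hc0 : 0 ≤ c := le_trans (norm_nonneg _) (hgb 0 le_rfl)
  set P : ℝ → ℝ := fun x => ∫ u in (0:ℝ)..x, μm u with hPdef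
  have hPc : ∀ T : ℝ, ContinuousOn P (Icc 0 T) := fun T => mu_prim_cont hμmInt T
  have hP0 : P 0 = 0 := intervalIntegral.integral_same
  have hPnn : ∀ x : ℝ, 0 ≤ x → 0 ≤ P x := fun x hx => mu_int_nonneg hμm_pos le_rfl hx
  have htail : ∀ r t : ℝ, 0 ≤ r → r ≤ t →
      ‖∫ s in r..t, W (t - s) (g s)‖ ≤ c * P (t - r) := by
    intro r t hr hrt
    exact kernel_tail hB hμm_pos hμm_bd hμmInt hr hrt hc0 (fun s hs => hgb s hs.1)
  intro t₀ ht₀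
  have ht₀' : (0:ℝ) ≤ t₀ := ht₀
  rw [Metric.continuousWithinAt_iff]
  intro ε hε
  rcases eq_or_lt_of_le ht₀' with heq | ht₀pos
  · -- t₀ = 0
    subst heq
    have hPc1 := (hPc 1) 0 (by norm_num)
    rw [Metric.continuousWithinAt_iff] at hPc1
    obtain ⟨δ₁, hδ₁0, hP1⟩ := hPc1 (ε / (c + 1)) (by positivity)
    refine ⟨min δ₁ 1, lt_min hδ₁0 one_pos, ?_⟩
    intro x hx hdist
    have hx0 : (0:ℝ) ≤ x := hx
    rw [Real.dist_eq, sub_zero, abs_of_nonneg hx0] at hdist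
    have hx1 : x ∈ Icc (0:ℝ) 1 := ⟨hx0, (lt_of_lt_of_le hdist (min_le_right _ _)).le⟩
    have hdist1 : dist x 0 < δ₁ := by
      rw [Real.dist_eq, sub_zero, abs_of_nonneg hx0]
      exact lt_of_lt_of_le hdist (min_le_left _ _)
    have hPx := hP1 hx1 hdist1
    rw [hP0, dist_eq_norm, sub_zero, Real.norm_eq_abs, abs_of_nonneg (hPnn x hx0)] at hPx
    have hΦ : ‖∫ s in (0:ℝ)..x, W (x - s) (g s)‖ ≤ c * P x := by
      have := htail 0 x le_rfl hx0
      simpa using this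
    rw [dist_eq_norm]
    simp only [intervalIntegral.integral_same]
    rw [sub_zero]
    have hq : 0 < ε / (c + 1) := by positivity
    have h1 : c * P x ≤ c * (ε / (c + 1)) := mul_le_mul_of_nonneg_left hPx.le hc0
    have h2 : c * (ε / (c + 1)) + ε / (c + 1) = ε := by field_simp
    calc ‖∫ s in (0:ℝ)..x, W (x - s) (g s)‖ ≤ c * P x := hΦ
      _ < ε := by linarith
  · -- t₀ > 0
    set T := t₀ + 1 with hTdef
    have hPcT := (hPc T) 0 ⟨le_rfl, by linarith⟩
    rw [Metric.continuousWithinAt_iff] at hPcT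
    obtain ⟨δ₁, hδ₁0, hP1⟩ := hPcT (ε / (3 * (c + 1))) (by positivity)
    set h := min (t₀ / 2) (min (1 / 4) (δ₁ / 4)) with hhdef
    have hh0 : 0 < h := lt_min (by linarith) (lt_min (by norm_num) (by linarith))
    have hh1 : h ≤ t₀ / 2 := min_le_left _ _
    have hh2 : h ≤ 1 / 4 := le_trans (min_le_right _ _) (min_le_left _ _)
    have hh3 : h ≤ δ₁ / 4 := le_trans (min_le_right _ _) (min_le_right _ _)
    have hP2h : P (2 * h) < ε / (3 * (c + 1)) := by
      have hmem : 2 * h ∈ Icc (0:ℝ) T := ⟨by linarith, by linarith⟩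
      have hd : dist (2 * h) 0 < δ₁ := by
        rw [Real.dist_eq, sub_zero, abs_of_nonneg (by linarith)]; linarith
      have := hP1 hmem hd
      rwa [hP0, dist_eq_norm, sub_zero, Real.norm_eq_abs,
        abs_of_nonneg (hPnn _ (by linarith))] at this
    set r := t₀ - h with hrdef
    have hr0 : (0:ℝ) ≤ r := by simp only [hrdef]; linarith
    have hrt₀ : r < t₀ := by simp only [hrdef]; linarith
    have hdt := conv_decomp hι_inj hUsem hV hW hWcont hB hμm_pos hμm_bd hμmInt hVc
      hg hgb hr0 hrt₀
    set X := ∫ s in (0:ℝ)..r, W (r - s) (g s) with hXdef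
    have hVX : ContinuousOn (fun τ => V τ X) (Ici 0) := by
      have hmap : ∀ τ ∈ Ici (0:ℝ), ((X, τ) : F × ℝ) ∈ (univ ×ˢ Ici (0:ℝ)) :=
        fun τ hτ => ⟨mem_univ _, hτ⟩
      exact hVcont.comp ((continuous_const.prodMk continuous_id).continuousOn) hmap
    have hVXh := hVX h (le_of_lt hh0)
    rw [Metric.continuousWithinAt_iff] at hVXh
    obtain ⟨δ₂, hδ₂0, hV2⟩ := hVXh (ε / 3) (by positivity)
    refine ⟨min h δ₂, lt_min hh0 hδ₂0, ?_⟩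
    intro x hx hdist
    have hx0 : (0:ℝ) ≤ x := hx
    have hdh : |x - t₀| < h := by
      rw [Real.dist_eq] at hdist; exact lt_of_lt_of_le hdist (min_le_left _ _)
    have hdδ₂ : |x - t₀| < δ₂ := by
      rw [Real.dist_eq] at hdist; exact lt_of_lt_of_le hdist (min_le_right _ _)
    have habs := abs_lt.1 hdh
    have hxr : r < x := by simp only [hrdef]; linarith [habs.1]
    have hxr2 : x - r < 2 * h := by simp only [hrdef]; linarith [habs.2]
    have hdx := conv_decomp hι_inj hUsem hV hW hWcont hB hμm_pos hμm_bd hμmInt hVc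
      hg hgb hr0 hxr
    rw [← hXdef] at hdx
    have hxrnn : (0:ℝ) ≤ x - r := by linarith
    have htrnn : (0:ℝ) ≤ t₀ - r := by linarith
    rw [dist_eq_norm, hdx, hdt, hVc (x - r) hxrnn, hVc (t₀ - r) htrnn]
    have hb1 : ‖V (x - r) X - V (t₀ - r) X‖ < ε / 3 := by
      have hmem : x - r ∈ Ici (0:ℝ) := hxrnn
      have hd : dist (x - r) h < δ₂ := by
        rw [Real.dist_eq]
        have : x - r - h = x - t₀ := by simp only [hrdef]; ring
        rw [this]; exact hdδ₂
      have := hV2 hmem hd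
      rw [dist_eq_norm] at this
      have hteq : t₀ - r = h := by simp only [hrdef]; ring
      rw [hteq]
      exact this
    have hb2 : ‖∫ s in r..x, W (x - s) (g s)‖ ≤ c * P (2 * h) := by
      refine le_trans (htail r x hr0 hxr.le) ?_
      have := mu_prim_mono hμm_pos hμmInt hxrnn hxr2.le
      nlinarith
    have hb3 : ‖∫ s in r..t₀, W (t₀ - s) (g s)‖ ≤ c * P (2 * h) := by
      refine le_trans (htail r t₀ hr0 hrt₀.le) ?_
      have h1 : t₀ - r ≤ 2 * h := by simp only [hrdef]; linarith
      have := mu_prim_mono hμm_pos hμmInt htrnn h1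
      nlinarith
    have hPnn2h : 0 ≤ P (2 * h) := hPnn _ (by linarith)
    have hfinal : c * P (2 * h) < ε / 3 := by
      have hq : 0 < ε / (3 * (c + 1)) := by positivity
      have h1 : c * P (2 * h) ≤ c * (ε / (3 * (c + 1))) :=
        mul_le_mul_of_nonneg_left hP2h.le hc0
      have h2 : c * (ε / (3 * (c + 1))) + ε / (3 * (c + 1)) = ε / 3 := by field_simp
      linarith
    refine lt_of_le_of_lt (norm_add_sub_add_le _ _ _ _) ?_
    linarith

end Conv

end Stmt9

set_option maxHeartbeats 4000000 in
/-- The "A-flow" approximate solution: with exponentially decaying forcing, `F# = ‖f₀‖+NJ`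
and `4KN F# ≤ 1`, the global solution `φ` of `VP(f₀)` satisfies
`‖φ(t) − φ_ap(t)‖ ≤ KN F#² 𝒳̂(4KN F#) e^{−Bt}`, where `φ_ap` is the flow of the linear
equation `φ̇ = Aφ + ξ(t)`. -/
theorem stmt_9
    {F Fm : Type*}
    [NormedAddCommGroup F] [NormedSpace ℝ F] [CompleteSpace F]
    [NormedAddCommGroup Fm] [NormedSpace ℝ Fm] [CompleteSpace Fm]
    -- F is a dense subspace of Fm, with continuous inclusion ι
    (ι : F →L[ℝ] Fm) (hι_inj : Function.Injective ι) (hι_dense : DenseRange ι)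
    -- the semigroup (e^{tA})_{t ≥ 0} on Fm, strongly continuous
    (U : ℝ → Fm →L[ℝ] Fm)
    (hU0 : U 0 = ContinuousLinearMap.id ℝ Fm)
    (hUsem : ∀ s ≥ (0:ℝ), ∀ t ≥ (0:ℝ), U (s + t) = (U s).comp (U t))
    (hUsc : ∀ f : Fm, ContinuousOn (fun t => U t f) (Ici (0:ℝ)))
    -- e^{tA} maps F into F (lift V), giving a strongly continuous semigroup on F
    (V : ℝ → F → F)
    (hV : ∀ t ≥ (0:ℝ), ∀ x : F, ι (V t x) = U t (ι x))
    (hVcont : ContinuousOn (fun p : F × ℝ => V p.2 p.1) (univ ×ˢ Ici (0:ℝ)))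
    -- e^{tA} maps Fm into F for t > 0 (lift W), continuously on Fm × (0,∞)
    (W : ℝ → Fm → F)
    (hW : ∀ t > (0:ℝ), ∀ f : Fm, ι (W t f) = U t f)
    (hWcont : ContinuousOn (fun p : Fm × ℝ => W p.2 p.1) (univ ×ˢ Ioi (0:ℝ)))
    -- the continuous bilinear map 𝒫 with constant K, and the forcing ξ
    (PP : F →L[ℝ] F →L[ℝ] Fm) (K : ℝ) (hK : 0 < K)
    (hPP : ∀ f g : F, ‖PP f g‖ ≤ K * ‖f‖ * ‖g‖)
    (ξ : ℝ → Fm)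
    (hξ : ∀ C : Set ℝ, IsCompact C → C ⊆ Ici (0:ℝ) →
      ∃ M : ℝ, ∀ t ∈ C, ∀ t' ∈ C, ‖ξ t - ξ t'‖ ≤ M * |t - t'|)
    -- constants B, N and the exponential semigroup estimators (P4'), (P5')
    (B N : ℝ) (hB : 0 ≤ B) (hN : 0 < N)
    (hu_bd : ∀ t ≥ (0:ℝ), ∀ x : F, ‖V t x‖ ≤ Real.exp (-(B * t)) * ‖x‖)
    (μm : ℝ → ℝ)
    (hμm_cont : ContinuousOn μm (Ioi (0:ℝ)))
    (hμm_pos : ∀ t > (0:ℝ), 0 < μm t)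
    (hμm_bd : ∀ t > (0:ℝ), ∀ f : Fm, ‖W t f‖ ≤ μm t * Real.exp (-(B * t)) * ‖f‖)
    (σ : ℝ) (hσ : σ ∈ Ioc (0:ℝ) 1)
    (hμm_O : ∃ C : ℝ, ∃ δ > (0:ℝ), ∀ t ∈ Ioo (0:ℝ) δ, μm t ≤ C / t ^ (1 - σ))
    (hμm_N : ∀ t ≥ (0:ℝ), (∫ s in (0:ℝ)..t, μm (t - s) * Real.exp (-(B * s))) ≤ N)
    -- exponentially decaying forcing
    (J : ℝ) (hJ : 0 ≤ J)
    (hξb : ∀ t ≥ (0:ℝ), ‖ξ t‖ ≤ J * Real.exp (-(2 * B * t)))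
    -- datum, F# and the smallness condition
    (f₀ : F) (Fs : ℝ) (hFs : Fs = ‖f₀‖ + N * J)
    (hcond : 4 * K * N * Fs ≤ 1)
    -- the A-flow approximate solution
    (φap : ℝ → F)
    (hφap : ∀ t ≥ (0:ℝ), φap t = V t f₀ + ∫ s in (0:ℝ)..t, W (t - s) (ξ s))
    -- the function 𝒳̂
    (XXh : ℝ → ℝ)
    (hXXh : ∀ z : ℝ, XXh z = if z = 0 then 1 else
      (1 - z / 2 - Real.sqrt (1 - z)) / (z ^ 2 / 8)) :
    ∃ φ : ℝ → F, ContinuousOn φ (Ici (0:ℝ)) ∧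
      (∀ t ≥ (0:ℝ), φ t = V t f₀ + ∫ s in (0:ℝ)..t, W (t - s) (PP (φ s) (φ s) + ξ s)) ∧
      ∀ t ≥ (0:ℝ), ‖φ t - φap t‖ ≤
        K * N * Fs ^ 2 * XXh (4 * K * N * Fs) * Real.exp (-(B * t)) := by
  classical
  obtain ⟨C, δ, hδ0, hCb⟩ := hμm_O
  have hμmInt : ∀ T : ℝ, IntegrableOn μm (Ioc 0 T) :=
    fun T => Stmt9.mu_integrableOn hμm_cont hμm_pos hσ.1 hδ0 hCb T
  have hFs0 : 0 ≤ Fs := by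
    rw [hFs]; have := norm_nonneg f₀; have := mul_nonneg hN.le hJ; linarith
  have hexple : ∀ s : ℝ, 0 ≤ s → Real.exp (-(B * s)) ≤ 1 := by
    intro s hs; rw [Real.exp_le_one_iff]; nlinarith
  -- continuity of ξ
  have hξcont : ContinuousOn ξ (Ici 0) := by
    intro t ht
    obtain ⟨M, hM⟩ := hξ (Icc 0 (t + 1)) isCompact_Icc (fun x hx => hx.1)
    rw [Metric.continuousWithinAt_iff]
    intro ε hε
    refine ⟨min 1 (ε / (|M| + 1)), by positivity, ?_⟩
    intro x hx hdist
    have hx0 : (0:ℝ) ≤ x := hx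
    rw [Real.dist_eq] at hdist
    have h1 : |x - t| < 1 := lt_of_lt_of_le hdist (min_le_left _ _)
    have h2 : |x - t| < ε / (|M| + 1) := lt_of_lt_of_le hdist (min_le_right _ _)
    have h1' := abs_lt.1 h1
    have hxmem : x ∈ Icc (0:ℝ) (t + 1) := ⟨hx0, by linarith [h1'.2]⟩
    have htmem : t ∈ Icc (0:ℝ) (t + 1) := ⟨ht, by linarith⟩
    have hMx := hM x hxmem t htmem
    rw [dist_eq_norm]
    have hq : 0 < ε / (|M| + 1) := by positivity
    have h3 : |M| * |x - t| ≤ |M| * (ε / (|M| + 1)) :=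
      mul_le_mul_of_nonneg_left h2.le (abs_nonneg M)
    have h4 : |M| * (ε / (|M| + 1)) + ε / (|M| + 1) = ε := by field_simp
    calc ‖ξ x - ξ t‖ ≤ M * |x - t| := hMx
      _ ≤ |M| * |x - t| := mul_le_mul_of_nonneg_right (le_abs_self M) (abs_nonneg _)
      _ < ε := by linarith
  -- additivity of W
  have hWadd : ∀ τ > (0:ℝ), ∀ f g' : Fm, W τ (f + g') = W τ f + W τ g' := by
    intro τ hτ f g'
    apply hι_inj
    have e1 : ι (W τ (f + g')) = U τ f + U τ g' := by rw [hW τ hτ, _root_.map_add]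
    have e2 : ι (W τ f + W τ g') = U τ f + U τ g' := by
      rw [_root_.map_add, hW τ hτ, hW τ hτ]
    rw [e1, e2]
  have hWsub : ∀ τ > (0:ℝ), ∀ f g' : Fm, W τ (f - g') = W τ f - W τ g' := by
    intro τ hτ f g'
    apply hι_inj
    have e1 : ι (W τ (f - g')) = U τ f - U τ g' := by rw [hW τ hτ, _root_.map_sub]
    have e2 : ι (W τ f - W τ g') = U τ f - U τ g' := by
      rw [_root_.map_sub, hW τ hτ, hW τ hτ]
    rw [e1, e2]
  -- φap facts
  have hVf₀cont : ContinuousOn (fun t => V t f₀) (Ici 0) :=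
    hVcont.comp ((continuous_const.prodMk continuous_id).continuousOn)
      (fun τ hτ => ⟨mem_univ _, hτ⟩)
  have hξbd' : ∀ s : ℝ, s ≥ 0 → ‖ξ s‖ ≤ J := by
    intro s hs
    refine le_trans (hξb s hs) ?_
    have h1 : Real.exp (-(2 * B * s)) ≤ 1 := by rw [Real.exp_le_one_iff]; nlinarith
    nlinarith
  have hφap_cont : ContinuousOn φap (Ici 0) := by
    have h2 := Stmt9.conv_contOn hι_inj hUsem hV hVcont hW hWcont hB hu_bd hμm_pos hμm_bd
      hμmInt hξcont hξbd'
    exact (hVf₀cont.add h2).congr (fun t ht => hφap t ht)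
  have hφap_bd : ∀ t : ℝ, t ≥ 0 → ‖φap t‖ ≤ Fs * Real.exp (-(B * t)) := by
    intro t ht
    rw [hφap t ht]
    have h1 := hu_bd t ht f₀
    have h2 : ‖∫ s in (0:ℝ)..t, W (t - s) (ξ s)‖ ≤ J * N * Real.exp (-(B * t)) :=
      Stmt9.kernel_norm hB hμm_pos hμm_bd hμmInt ht hJ
        (fun s hs => hξb s hs.1) (hμm_N t ht)
    calc ‖V t f₀ + ∫ s in (0:ℝ)..t, W (t - s) (ξ s)‖
        ≤ ‖V t f₀‖ + ‖∫ s in (0:ℝ)..t, W (t - s) (ξ s)‖ := norm_add_le _ _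
      _ ≤ Real.exp (-(B * t)) * ‖f₀‖ + J * N * Real.exp (-(B * t)) := add_le_add h1 h2
      _ = Fs * Real.exp (-(B * t)) := by rw [hFs]; ring
  -- the fixed point Hs
  obtain ⟨Hs, hHsdef⟩ : ∃ Hs : ℝ, Hs = K * N * Fs ^ 2 * XXh (4 * K * N * Fs) := ⟨_, rfl⟩
  have hKN : (0:ℝ) < K * N := mul_pos hK hN
  have hHs_fix : Hs = K * N * (Fs + Hs) ^ 2 := by
    rcases eq_or_lt_of_le hFs0 with hFsz | hFsp
    · have hz : 4 * K * N * Fs = 0 := by rw [← hFsz]; ring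
      rw [hHsdef, hz, hXXh 0, if_pos rfl, ← hFsz]
      ring
    · have hzpos : 0 < 4 * K * N * Fs := by positivity
      have hzne : 4 * K * N * Fs ≠ 0 := ne_of_gt hzpos
      have hz1 : 4 * K * N * Fs ≤ 1 := hcond
      have hw2 : Real.sqrt (1 - 4 * K * N * Fs) ^ 2 = 1 - 4 * K * N * Fs :=
        Real.sq_sqrt (by linarith)
      set w := Real.sqrt (1 - 4 * K * N * Fs) with hwdef
      have hHs_eq : Hs = (1 - 2 * (K * N) * Fs - w) / (2 * (K * N)) := by
        rw [hHsdef, hXXh (4 * K * N * Fs), if_neg hzne, ← hwdef]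
        field_simp
        ring
      have h1 : Fs + Hs = (1 - w) / (2 * (K * N)) := by
        rw [hHs_eq]; field_simp; ring
      calc Hs = (1 - 2 * (K * N) * Fs - w) / (2 * (K * N)) := hHs_eq
        _ = (1 - 2 * w + (1 - 4 * K * N * Fs)) / (4 * (K * N)) := by field_simp; ring
        _ = (1 - 2 * w + w ^ 2) / (4 * (K * N)) := by rw [hw2]
        _ = K * N * ((1 - w) / (2 * (K * N))) ^ 2 := by field_simp; ring
        _ = K * N * (Fs + Hs) ^ 2 := by rw [h1]
  have hHs0 : 0 ≤ Hs := by
    rcases eq_or_lt_of_le hFs0 with hFsz | hFsp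
    · have hz : 4 * K * N * Fs = 0 := by rw [← hFsz]; ring
      rw [hHsdef, hz, ← hFsz]
      simp
    · have hzpos : 0 < 4 * K * N * Fs := by positivity
      have hz1 : 4 * K * N * Fs ≤ 1 := hcond
      have hw2 : Real.sqrt (1 - 4 * K * N * Fs) ^ 2 = 1 - 4 * K * N * Fs :=
        Real.sq_sqrt (by linarith)
      have hw0 : 0 ≤ Real.sqrt (1 - 4 * K * N * Fs) := Real.sqrt_nonneg _
      have hwle : Real.sqrt (1 - 4 * K * N * Fs) ≤ 1 - (4 * K * N * Fs) / 2 := by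
        nlinarith [hw2, hw0]
      rw [hHsdef, hXXh (4 * K * N * Fs), if_neg (ne_of_gt hzpos)]
      have hnum : 0 ≤ 1 - (4 * K * N * Fs) / 2 - Real.sqrt (1 - 4 * K * N * Fs) := by
        linarith
      have hden : 0 < (4 * K * N * Fs) ^ 2 / 8 := by positivity
      positivity
  -- the sequence of bounds
  obtain ⟨Hq, hH0, hHsucc⟩ : ∃ H : ℕ → ℝ, H 0 = 0 ∧ ∀ n, H (n + 1) = K * N * (Fs + H n) ^ 2 :=
    ⟨fun n => Nat.rec 0 (fun _ a => K * N * (Fs + a) ^ 2) n, rfl, fun n => rfl⟩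
  have hHnn : ∀ n, 0 ≤ Hq n := by
    intro n
    induction n with
    | zero => rw [hH0]
    | succ n ih => rw [hHsucc]; positivity
  have hHle : ∀ n, Hq n ≤ Hs := by
    intro n
    induction n with
    | zero => rw [hH0]; exact hHs0
    | succ n ih =>
      rw [hHsucc, hHs_fix]
      have h1 : Fs + Hq n ≤ Fs + Hs := by linarith
      have h2 : (0:ℝ) ≤ Fs + Hq n := by linarith [hHnn n]
      have := pow_le_pow_left₀ h2 h1 2
      nlinarith
  have hHmono : ∀ n, Hq n ≤ Hq (n + 1) := by
    intro n
    induction n with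
    | zero => rw [hH0, hHsucc]; positivity
    | succ n ih =>
      rw [hHsucc, hHsucc (n + 1)]
      have h2 : (0:ℝ) ≤ Fs + Hq n := by linarith [hHnn n]
      have := pow_le_pow_left₀ h2 (by linarith : Fs + Hq n ≤ Fs + Hq (n + 1)) 2
      nlinarith
  have hHmono' : Monotone Hq := monotone_nat_of_le_succ hHmono
  have hbddH : BddAbove (range Hq) := by
    refine ⟨Hs, ?_⟩
    rintro x ⟨n, rfl⟩
    exact hHle n
  obtain ⟨L, hLdef⟩ : ∃ L : ℝ, L = ⨆ n, Hq n := ⟨_, rfl⟩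
  have hLtend : Filter.Tendsto Hq Filter.atTop (nhds L) := by
    rw [hLdef]; exact tendsto_atTop_ciSup hHmono' hbddH
  have hHleL : ∀ n, Hq n ≤ L := by
    intro n; rw [hLdef]; exact le_ciSup hbddH n
  have hLle : L ≤ Hs := by
    rw [hLdef]; exact ciSup_le hHle
  -- the Picard iterates
  obtain ⟨ψ, hψ0, hψsucc⟩ : ∃ ψ : ℕ → ℝ → F, ψ 0 = φap ∧ ∀ n t, ψ (n + 1) t
      = φap t + ∫ s in (0:ℝ)..t, W (t - s) (PP (ψ n s) (ψ n s)) :=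
    ⟨fun n => Nat.rec φap
      (fun _ p => fun t => φap t + ∫ s in (0:ℝ)..t, W (t - s) (PP (p s) (p s))) n,
      rfl, fun n t => rfl⟩
  -- bilinear bounds
  have hexp2 : ∀ s : ℝ, Real.exp (-(B * s)) * Real.exp (-(B * s)) = Real.exp (-(2 * B * s)) := by
    intro s; rw [← Real.exp_add]; congr 1; ring
  have hPPb : ∀ (a : ℝ → F) (α : ℝ), 0 ≤ α → (∀ s : ℝ, s ≥ 0 → ‖a s‖ ≤ α * Real.exp (-(B * s)))
      → ∀ s : ℝ, s ≥ 0 → ‖PP (a s) (a s)‖ ≤ K * α ^ 2 * Real.exp (-(2 * B * s)) := by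
    intro a α hα ha s hs
    have h1 := hPP (a s) (a s)
    have h2 := ha s hs
    have he := (Real.exp_pos (-(B * s))).le
    have hn := norm_nonneg (a s)
    have hsq : ‖a s‖ * ‖a s‖ ≤ (α * Real.exp (-(B * s))) * (α * Real.exp (-(B * s))) :=
      mul_le_mul h2 h2 hn (mul_nonneg hα he)
    calc ‖PP (a s) (a s)‖ ≤ K * ‖a s‖ * ‖a s‖ := h1
      _ = K * (‖a s‖ * ‖a s‖) := by ring
      _ ≤ K * ((α * Real.exp (-(B * s))) * (α * Real.exp (-(B * s)))) :=
          mul_le_mul_of_nonneg_left hsq hK.le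
      _ = K * α ^ 2 * Real.exp (-(2 * B * s)) := by
          rw [← hexp2 s]; ring
  have hPPdiff : ∀ (a b : ℝ → F) (α β d : ℝ), 0 ≤ α → 0 ≤ β → 0 ≤ d →
      (∀ s : ℝ, s ≥ 0 → ‖a s‖ ≤ α * Real.exp (-(B * s))) →
      (∀ s : ℝ, s ≥ 0 → ‖b s‖ ≤ β * Real.exp (-(B * s))) →
      (∀ s : ℝ, s ≥ 0 → ‖a s - b s‖ ≤ d * Real.exp (-(B * s))) →
      ∀ s : ℝ, s ≥ 0 → ‖PP (a s) (a s) - PP (b s) (b s)‖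
        ≤ K * (α + β) * d * Real.exp (-(2 * B * s)) := by
    intro a b α β d hα hβ hd ha hb hab s hs
    have hsplit : PP (a s) (a s) - PP (b s) (b s)
        = PP (a s) (a s - b s) + PP (a s - b s) (b s) := by
      have h₁ : PP (a s) (a s - b s) = PP (a s) (a s) - PP (a s) (b s) :=
        ContinuousLinearMap.map_sub _ _ _
      have h₂ : PP (a s - b s) = PP (a s) - PP (b s) :=
        ContinuousLinearMap.map_sub _ _ _
      rw [h₁, h₂, ContinuousLinearMap.sub_apply]
      abel
    rw [hsplit]
    have h1 := hPP (a s) (a s - b s)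
    have h2 := hPP (a s - b s) (b s)
    have he := (Real.exp_pos (-(B * s))).le
    have hn1 := norm_nonneg (a s)
    have hn2 := norm_nonneg (b s)
    have hn3 := norm_nonneg (a s - b s)
    have ha' := ha s hs
    have hb' := hb s hs
    have hab' := hab s hs
    calc ‖PP (a s) (a s - b s) + PP (a s - b s) (b s)‖
        ≤ ‖PP (a s) (a s - b s)‖ + ‖PP (a s - b s) (b s)‖ := norm_add_le _ _
      _ ≤ K * (α * Real.exp (-(B * s))) * (d * Real.exp (-(B * s)))
          + K * (d * Real.exp (-(B * s))) * (β * Real.exp (-(B * s))) := by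
          have hsq1 : ‖a s‖ * ‖a s - b s‖
              ≤ (α * Real.exp (-(B * s))) * (d * Real.exp (-(B * s))) :=
            mul_le_mul ha' hab' hn3 (mul_nonneg hα he)
          have hsq2 : ‖a s - b s‖ * ‖b s‖
              ≤ (d * Real.exp (-(B * s))) * (β * Real.exp (-(B * s))) :=
            mul_le_mul hab' hb' hn2 (mul_nonneg hd he)
          have e1 : K * ‖a s‖ * ‖a s - b s‖
              ≤ K * (α * Real.exp (-(B * s))) * (d * Real.exp (-(B * s))) := by
            have := mul_le_mul_of_nonneg_left hsq1 hK.le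
            calc K * ‖a s‖ * ‖a s - b s‖ = K * (‖a s‖ * ‖a s - b s‖) := by ring
              _ ≤ K * ((α * Real.exp (-(B * s))) * (d * Real.exp (-(B * s)))) := this
              _ = K * (α * Real.exp (-(B * s))) * (d * Real.exp (-(B * s))) := by ring
          have e2 : K * ‖a s - b s‖ * ‖b s‖
              ≤ K * (d * Real.exp (-(B * s))) * (β * Real.exp (-(B * s))) := by
            have := mul_le_mul_of_nonneg_left hsq2 hK.le
            calc K * ‖a s - b s‖ * ‖b s‖ = K * (‖a s - b s‖ * ‖b s‖) := by ring
              _ ≤ K * ((d * Real.exp (-(B * s))) * (β * Real.exp (-(B * s)))) := this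
              _ = K * (d * Real.exp (-(B * s))) * (β * Real.exp (-(B * s))) := by ring
          exact add_le_add (le_trans h1 e1) (le_trans h2 e2)
      _ = K * (α + β) * d * Real.exp (-(2 * B * s)) := by
          rw [← hexp2 s]; ring
  -- the invariant: continuity and distance to φap
  have hInv : ∀ n, ContinuousOn (ψ n) (Ici 0)
      ∧ ∀ t : ℝ, t ≥ 0 → ‖ψ n t - φap t‖ ≤ Hq n * Real.exp (-(B * t)) := by
    intro n
    induction n with
    | zero =>
      refine ⟨hψ0 ▸ hφap_cont, ?_⟩
      intro t ht
      rw [hψ0, sub_self, norm_zero, hH0, zero_mul]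
    | succ n ih =>
      obtain ⟨ihc, ihb⟩ := ih
      have hbd_n : ∀ s : ℝ, s ≥ 0 → ‖ψ n s‖ ≤ (Fs + Hq n) * Real.exp (-(B * s)) := by
        intro s hs
        have hdecomp : ψ n s = (ψ n s - φap s) + φap s := by abel
        calc ‖ψ n s‖ = ‖(ψ n s - φap s) + φap s‖ := by rw [← hdecomp]
          _ ≤ ‖ψ n s - φap s‖ + ‖φap s‖ := norm_add_le _ _
          _ ≤ Hq n * Real.exp (-(B * s)) + Fs * Real.exp (-(B * s)) :=
              add_le_add (ihb s hs) (hφap_bd s hs)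
          _ = (Fs + Hq n) * Real.exp (-(B * s)) := by ring
      have hgb := hPPb (ψ n) (Fs + Hq n) (by linarith [hHnn n]) hbd_n
      have hgcont : ContinuousOn (fun s => PP (ψ n s) (ψ n s)) (Ici (0:ℝ)) :=
        (PP.continuous.comp_continuousOn ihc).clm_apply ihc
      constructor
      · have hgb' : ∀ s : ℝ, s ≥ 0 → ‖PP (ψ n s) (ψ n s)‖ ≤ K * (Fs + Hq n) ^ 2 := by
          intro s hs
          refine le_trans (hgb s hs) ?_
          have h1 : Real.exp (-(2 * B * s)) ≤ 1 := by rw [Real.exp_le_one_iff]; nlinarith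
          have h2 : 0 ≤ K * (Fs + Hq n) ^ 2 := by positivity
          nlinarith
        have h2 := Stmt9.conv_contOn hι_inj hUsem hV hVcont hW hWcont hB hu_bd hμm_pos
          hμm_bd hμmInt hgcont hgb'
        exact (hφap_cont.add h2).congr (fun t _ => hψsucc n t)
      · intro t ht
        have heq : ψ (n + 1) t - φap t
            = ∫ s in (0:ℝ)..t, W (t - s) (PP (ψ n s) (ψ n s)) := by
          rw [hψsucc n t]; abel
        rw [heq, hHsucc]
        have hker := Stmt9.kernel_norm hB hμm_pos hμm_bd hμmInt ht
          (mul_nonneg hK.le (sq_nonneg (Fs + Hq n))) (fun s hs => hgb s hs.1) (hμm_N t ht)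
        calc ‖∫ s in (0:ℝ)..t, W (t - s) (PP (ψ n s) (ψ n s))‖
            ≤ K * (Fs + Hq n) ^ 2 * N * Real.exp (-(B * t)) := hker
          _ = K * N * (Fs + Hq n) ^ 2 * Real.exp (-(B * t)) := by ring
  have hψcont : ∀ n, ContinuousOn (ψ n) (Ici 0) := fun n => (hInv n).1
  have hψbd : ∀ n, ∀ s : ℝ, s ≥ 0 → ‖ψ n s‖ ≤ (Fs + Hq n) * Real.exp (-(B * s)) := by
    intro n s hs
    have hdecomp : ψ n s = (ψ n s - φap s) + φap s := by abel
    calc ‖ψ n s‖ = ‖(ψ n s - φap s) + φap s‖ := by rw [← hdecomp]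
      _ ≤ ‖ψ n s - φap s‖ + ‖φap s‖ := norm_add_le _ _
      _ ≤ Hq n * Real.exp (-(B * s)) + Fs * Real.exp (-(B * s)) :=
          add_le_add ((hInv n).2 s hs) (hφap_bd s hs)
      _ = (Fs + Hq n) * Real.exp (-(B * s)) := by ring
  -- the key difference estimate for quadratic integral terms
  have hkey_diff : ∀ (a b : ℝ → F) (α β d : ℝ), 0 ≤ α → 0 ≤ β → 0 ≤ d →
      ContinuousOn a (Ici 0) → ContinuousOn b (Ici 0) →
      (∀ s : ℝ, s ≥ 0 → ‖a s‖ ≤ α * Real.exp (-(B * s))) →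
      (∀ s : ℝ, s ≥ 0 → ‖b s‖ ≤ β * Real.exp (-(B * s))) →
      (∀ s : ℝ, s ≥ 0 → ‖a s - b s‖ ≤ d * Real.exp (-(B * s))) →
      ∀ t : ℝ, t ≥ 0 →
      ‖(∫ s in (0:ℝ)..t, W (t - s) (PP (a s) (a s)))
        - ∫ s in (0:ℝ)..t, W (t - s) (PP (b s) (b s))‖
        ≤ K * (α + β) * d * N * Real.exp (-(B * t)) := by
    intro a b α β d hα hβ hd hca hcb ha hb hab t ht
    have hconst : ∀ (u : ℝ → F) (γ : ℝ), 0 ≤ γ →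
        (∀ s : ℝ, s ≥ 0 → ‖u s‖ ≤ γ * Real.exp (-(B * s))) →
        ∀ s ∈ Icc (0:ℝ) t, ‖PP (u s) (u s)‖ ≤ K * γ ^ 2 := by
      intro u γ hγ hu s hs
      refine le_trans (hPPb u γ hγ hu s hs.1) ?_
      have h1 : Real.exp (-(2 * B * s)) ≤ 1 := by
        rw [Real.exp_le_one_iff]; nlinarith [hs.1]
      have h2 : 0 ≤ K * γ ^ 2 := by positivity
      nlinarith
    have hcat : ContinuousOn a (Icc 0 t) := hca.mono (fun x hx => hx.1)
    have hcbt : ContinuousOn b (Icc 0 t) := hcb.mono (fun x hx => hx.1)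
    have hgacont : ContinuousOn (fun s => PP (a s) (a s)) (Icc 0 t) :=
      (PP.continuous.comp_continuousOn hcat).clm_apply hcat
    have hgbcont : ContinuousOn (fun s => PP (b s) (b s)) (Icc 0 t) :=
      (PP.continuous.comp_continuousOn hcbt).clm_apply hcbt
    have hIa := Stmt9.kernel_intble hWcont hB hμm_pos hμm_bd hμmInt ht
      hgacont (hconst a α hα ha)
    have hIb := Stmt9.kernel_intble hWcont hB hμm_pos hμm_bd hμmInt ht
      hgbcont (hconst b β hβ hb)
    rw [← intervalIntegral.integral_sub hIa hIb]
    have hcongr : (∫ s in (0:ℝ)..t,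
          (W (t - s) (PP (a s) (a s)) - W (t - s) (PP (b s) (b s))))
        = ∫ s in (0:ℝ)..t, W (t - s) (PP (a s) (a s) - PP (b s) (b s)) := by
      apply intervalIntegral.integral_congr_ae
      filter_upwards [Stmt9.ae_ne_pt t] with s hst hmem
      rw [uIoc_of_le ht] at hmem
      have hslt : s < t := lt_of_le_of_ne hmem.2 hst
      rw [hWsub (t - s) (by linarith)]
    rw [hcongr]
    exact Stmt9.kernel_norm hB hμm_pos hμm_bd hμmInt ht
      (mul_nonneg (mul_nonneg hK.le (add_nonneg hα hβ)) hd)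
      (fun s hs => hPPdiff a b α β d hα hβ hd ha hb hab s hs.1) (hμm_N t ht)
  -- successive differences
  have hstep : ∀ n, ∀ t : ℝ, t ≥ 0 →
      ‖ψ (n + 1) t - ψ n t‖ ≤ (Hq (n + 1) - Hq n) * Real.exp (-(B * t)) := by
    intro n
    induction n with
    | zero =>
      intro t ht
      have heq : ψ 1 t - ψ 0 t = ∫ s in (0:ℝ)..t, W (t - s) (PP (ψ 0 s) (ψ 0 s)) := by
        rw [hψsucc 0 t, hψ0]; abel
      rw [heq]
      have hgb := hPPb (ψ 0) Fs hFs0 (by intro s hs; rw [hψ0]; exact hφap_bd s hs)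
      have hker := Stmt9.kernel_norm hB hμm_pos hμm_bd hμmInt ht
        (mul_nonneg hK.le (sq_nonneg Fs)) (fun s hs => hgb s hs.1) (hμm_N t ht)
      calc ‖∫ s in (0:ℝ)..t, W (t - s) (PP (ψ 0 s) (ψ 0 s))‖
          ≤ K * Fs ^ 2 * N * Real.exp (-(B * t)) := hker
        _ = (Hq 1 - Hq 0) * Real.exp (-(B * t)) := by rw [hHsucc 0, hH0]; ring
    | succ n ih =>
      intro t ht
      have heq : ψ (n + 2) t - ψ (n + 1) t
          = (∫ s in (0:ℝ)..t, W (t - s) (PP (ψ (n + 1) s) (ψ (n + 1) s)))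
            - ∫ s in (0:ℝ)..t, W (t - s) (PP (ψ n s) (ψ n s)) := by
        rw [hψsucc (n + 1) t, hψsucc n t]; abel
      rw [heq]
      have hd := hkey_diff (ψ (n + 1)) (ψ n) (Fs + Hq (n + 1)) (Fs + Hq n) (Hq (n + 1) - Hq n)
        (by linarith [hHnn (n + 1)]) (by linarith [hHnn n]) (by linarith [hHmono n])
        (hψcont (n + 1)) (hψcont n) (hψbd (n + 1)) (hψbd n) (fun s hs => ih s hs) t ht
      refine le_trans hd (le_of_eq ?_)
      rw [hHsucc (n + 1), hHsucc n]
      ring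
  -- telescoping
  have htele : ∀ n m, n ≤ m → ∀ t : ℝ, t ≥ 0 →
      ‖ψ m t - ψ n t‖ ≤ (Hq m - Hq n) * Real.exp (-(B * t)) := by
    intro n m hnm
    induction m, hnm using Nat.le_induction with
    | base => intro t ht; rw [sub_self, norm_zero, sub_self, zero_mul]
    | succ m hm ih =>
      intro t ht
      have hdecomp : ψ (m + 1) t - ψ n t = (ψ (m + 1) t - ψ m t) + (ψ m t - ψ n t) := by abel
      calc ‖ψ (m + 1) t - ψ n t‖
          ≤ ‖ψ (m + 1) t - ψ m t‖ + ‖ψ m t - ψ n t‖ := by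
            rw [hdecomp]; exact norm_add_le _ _
        _ ≤ (Hq (m + 1) - Hq m) * Real.exp (-(B * t))
            + (Hq m - Hq n) * Real.exp (-(B * t)) := add_le_add (hstep m t ht) (ih t ht)
        _ = (Hq (m + 1) - Hq n) * Real.exp (-(B * t)) := by ring
  -- Cauchy sequence and the limit φ
  have hcau : ∀ t : ℝ, CauchySeq (fun n => ψ n (max t 0)) := by
    intro t
    refine cauchySeq_of_le_tendsto_0 (fun n => L - Hq n) ?_ ?_
    · intro n m N' hn hm
      have ht0 : (0:ℝ) ≤ max t 0 := le_max_right _ _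
      have hexp1 : Real.exp (-(B * max t 0)) ≤ 1 := hexple _ ht0
      have hexp0 : (0:ℝ) ≤ Real.exp (-(B * max t 0)) := (Real.exp_pos _).le
      rcases le_total n m with h | h
      · rw [dist_eq_norm, norm_sub_rev]
        have h1 := htele n m h (max t 0) ht0
        have h2 : Hq m - Hq n ≤ L - Hq N' := by
          have := hHleL m; have := hHmono' hn; linarith
        have h3 : (0:ℝ) ≤ Hq m - Hq n := by have := hHmono' h; linarith
        calc ‖ψ m (max t 0) - ψ n (max t 0)‖
            ≤ (Hq m - Hq n) * Real.exp (-(B * max t 0)) := h1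
          _ ≤ Hq m - Hq n := by nlinarith
          _ ≤ L - Hq N' := h2
      · rw [dist_eq_norm]
        have h1 := htele m n h (max t 0) ht0
        have h2 : Hq n - Hq m ≤ L - Hq N' := by
          have := hHleL n; have := hHmono' hm; linarith
        have h3 : (0:ℝ) ≤ Hq n - Hq m := by have := hHmono' h; linarith
        calc ‖ψ n (max t 0) - ψ m (max t 0)‖
            ≤ (Hq n - Hq m) * Real.exp (-(B * max t 0)) := h1
          _ ≤ Hq n - Hq m := by nlinarith
          _ ≤ L - Hq N' := h2
    · have h : Filter.Tendsto (fun n => L - Hq n) Filter.atTop (nhds (L - L)) :=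
        Filter.Tendsto.sub tendsto_const_nhds hLtend
      simpa using h
  choose φ hφlim using fun t => cauchySeq_tendsto_of_complete (hcau t)
  have hφtend : ∀ t : ℝ, t ≥ 0 → Filter.Tendsto (fun n => ψ n t) Filter.atTop (nhds (φ t)) := by
    intro t ht
    have := hφlim t
    rwa [max_eq_left ht] at this
  have hrate : ∀ t : ℝ, t ≥ 0 → ∀ n, ‖φ t - ψ n t‖ ≤ (L - Hq n) * Real.exp (-(B * t)) := by
    intro t ht n
    have hlim : Filter.Tendsto (fun m => ‖ψ m t - ψ n t‖) Filter.atTop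
        (nhds ‖φ t - ψ n t‖) := (Filter.Tendsto.sub_const (hφtend t ht) _).norm
    refine le_of_tendsto hlim ?_
    filter_upwards [Filter.eventually_ge_atTop n] with m hm
    calc ‖ψ m t - ψ n t‖ ≤ (Hq m - Hq n) * Real.exp (-(B * t)) := htele n m hm t ht
      _ ≤ (L - Hq n) * Real.exp (-(B * t)) :=
          mul_le_mul_of_nonneg_right (by linarith [hHleL m]) (Real.exp_pos _).le
  have hφbd : ∀ t : ℝ, t ≥ 0 → ‖φ t‖ ≤ (Fs + Hs) * Real.exp (-(B * t)) := by
    intro t ht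
    refine le_of_tendsto (hφtend t ht).norm ?_
    filter_upwards with n
    calc ‖ψ n t‖ ≤ (Fs + Hq n) * Real.exp (-(B * t)) := hψbd n t ht
      _ ≤ (Fs + Hs) * Real.exp (-(B * t)) :=
          mul_le_mul_of_nonneg_right (by linarith [hHle n]) (Real.exp_pos _).le
  have hφcont : ContinuousOn φ (Ici 0) := by
    have huni : TendstoUniformlyOn (fun n t => ψ n t) φ Filter.atTop (Ici 0) := by
      rw [Metric.tendstoUniformlyOn_iff]
      intro ε hε
      have h0 : Filter.Tendsto (fun n => L - Hq n) Filter.atTop (nhds 0) := by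
        have h : Filter.Tendsto (fun n => L - Hq n) Filter.atTop (nhds (L - L)) :=
          Filter.Tendsto.sub tendsto_const_nhds hLtend
        simpa using h
      filter_upwards [h0.eventually_lt_const hε] with n hn t ht
      have h1 := hrate t ht n
      have h2 : Real.exp (-(B * t)) ≤ 1 := hexple t ht
      have h3 : (0:ℝ) ≤ L - Hq n := by linarith [hHleL n]
      rw [dist_eq_norm]
      calc ‖φ t - ψ n t‖ ≤ (L - Hq n) * Real.exp (-(B * t)) := h1
        _ ≤ L - Hq n := by nlinarith
        _ < ε := hn
    exact huni.continuousOn (Filter.Eventually.of_forall hψcont).frequently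
  -- conclusion
  have hφPPcont : ContinuousOn (fun s => PP (φ s) (φ s)) (Ici (0:ℝ)) :=
    (PP.continuous.comp_continuousOn hφcont).clm_apply hφcont
  refine ⟨φ, hφcont, ?_, ?_⟩
  · -- the Volterra equation
    intro t ht
    have hφPPcont' : ContinuousOn (fun s => PP (φ s) (φ s)) (Icc (0:ℝ) t) :=
      hφPPcont.mono (fun x hx => hx.1)
    have hgbφ := hPPb φ (Fs + Hs) (by linarith) hφbd
    have hIφ : IntervalIntegrable (fun s => W (t - s) (PP (φ s) (φ s))) volume 0 t := by
      refine Stmt9.kernel_intble (c := K * (Fs + Hs) ^ 2) hWcont hB hμm_pos hμm_bd hμmInt ht hφPPcont' ?_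
      intro s hs
      refine le_trans (hgbφ s hs.1) ?_
      have h1 : Real.exp (-(2 * B * s)) ≤ 1 := by rw [Real.exp_le_one_iff]; nlinarith [hs.1]
      have h2 : 0 ≤ K * (Fs + Hs) ^ 2 := by positivity
      nlinarith
    have hIξ : IntervalIntegrable (fun s => W (t - s) (ξ s)) volume 0 t :=
      Stmt9.kernel_intble hWcont hB hμm_pos hμm_bd hμmInt ht
        (hξcont.mono (fun x hx => hx.1)) (fun s hs => hξbd' s hs.1)
    have heqn : φ t = φap t + ∫ s in (0:ℝ)..t, W (t - s) (PP (φ s) (φ s)) := by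
      have hbnd : ∀ n : ℕ, ‖φ t - (φap t + ∫ s in (0:ℝ)..t, W (t - s) (PP (φ s) (φ s)))‖
          ≤ (L - Hq (n + 1)) + K * ((Fs + Hs) + (Fs + Hs)) * (L - Hq n) * N := by
        intro n
        have hd1 := hrate t ht (n + 1)
        have hd2 := hkey_diff (ψ n) φ (Fs + Hs) (Fs + Hs) (L - Hq n)
          (by linarith) (by linarith) (by linarith [hHleL n]) (hψcont n) hφcont
          (fun s hs => le_trans (hψbd n s hs)
            (mul_le_mul_of_nonneg_right (by linarith [hHle n]) (Real.exp_pos _).le))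
          hφbd
          (fun s hs => by rw [norm_sub_rev]; exact hrate s hs n) t ht
        have hsplit : φ t - (φap t + ∫ s in (0:ℝ)..t, W (t - s) (PP (φ s) (φ s)))
            = (φ t - ψ (n + 1) t) + ((∫ s in (0:ℝ)..t, W (t - s) (PP (ψ n s) (ψ n s)))
              - ∫ s in (0:ℝ)..t, W (t - s) (PP (φ s) (φ s))) := by
          rw [hψsucc n t]; abel
        rw [hsplit]
        have he1 : Real.exp (-(B * t)) ≤ 1 := hexple t ht
        have he0 : (0:ℝ) ≤ Real.exp (-(B * t)) := (Real.exp_pos _).le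
        have hc1 : 0 ≤ L - Hq (n + 1) := by linarith [hHleL (n + 1)]
        have hc2 : 0 ≤ K * ((Fs + Hs) + (Fs + Hs)) * (L - Hq n) * N :=
          mul_nonneg (mul_nonneg (mul_nonneg hK.le (by linarith))
            (by linarith [hHleL n])) hN.le
        calc ‖(φ t - ψ (n + 1) t) + ((∫ s in (0:ℝ)..t, W (t - s) (PP (ψ n s) (ψ n s)))
              - ∫ s in (0:ℝ)..t, W (t - s) (PP (φ s) (φ s)))‖
            ≤ ‖φ t - ψ (n + 1) t‖ + ‖(∫ s in (0:ℝ)..t, W (t - s) (PP (ψ n s) (ψ n s)))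
              - ∫ s in (0:ℝ)..t, W (t - s) (PP (φ s) (φ s))‖ := norm_add_le _ _
          _ ≤ (L - Hq (n + 1)) * Real.exp (-(B * t))
              + K * ((Fs + Hs) + (Fs + Hs)) * (L - Hq n) * N * Real.exp (-(B * t)) :=
              add_le_add hd1 hd2
          _ ≤ (L - Hq (n + 1)) + K * ((Fs + Hs) + (Fs + Hs)) * (L - Hq n) * N := by nlinarith
      have htendb : Filter.Tendsto
          (fun n : ℕ => (L - Hq (n + 1)) + K * ((Fs + Hs) + (Fs + Hs)) * (L - Hq n) * N)
          Filter.atTop (nhds 0) := by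
        have h1 : Filter.Tendsto (fun n : ℕ => L - Hq (n + 1)) Filter.atTop (nhds (L - L)) :=
          Filter.Tendsto.sub tendsto_const_nhds
            (hLtend.comp (Filter.tendsto_add_atTop_nat 1))
        have h2 : Filter.Tendsto
            (fun n : ℕ => K * ((Fs + Hs) + (Fs + Hs)) * (L - Hq n) * N)
            Filter.atTop (nhds (K * ((Fs + Hs) + (Fs + Hs)) * (L - L) * N)) :=
          ((Filter.Tendsto.sub tendsto_const_nhds hLtend).const_mul _).mul_const _
        have h3 := h1.add h2
        simpa using h3
      have h0 : ‖φ t - (φap t + ∫ s in (0:ℝ)..t, W (t - s) (PP (φ s) (φ s)))‖ ≤ 0 :=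
        ge_of_tendsto htendb (Filter.Eventually.of_forall hbnd)
      have h1 : φ t - (φap t + ∫ s in (0:ℝ)..t, W (t - s) (PP (φ s) (φ s))) = 0 := by
        rwa [norm_le_zero_iff] at h0
      exact sub_eq_zero.1 h1
    rw [heqn, hφap t ht]
    have haddW : (∫ s in (0:ℝ)..t, W (t - s) (PP (φ s) (φ s) + ξ s))
        = (∫ s in (0:ℝ)..t, W (t - s) (PP (φ s) (φ s)))
          + ∫ s in (0:ℝ)..t, W (t - s) (ξ s) := by
      rw [← intervalIntegral.integral_add hIφ hIξ]
      apply intervalIntegral.integral_congr_ae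
      filter_upwards [Stmt9.ae_ne_pt t] with s hst hmem
      rw [uIoc_of_le ht] at hmem
      have hslt : s < t := lt_of_le_of_ne hmem.2 hst
      exact hWadd (t - s) (by linarith) _ _
    rw [haddW]
    abel
  · -- the error bound
    intro t ht
    rw [← hHsdef]
    refine le_of_tendsto ((Filter.Tendsto.sub_const (hφtend t ht) (φap t)).norm) ?_
    filter_upwards with n
    calc ‖ψ n t - φap t‖ ≤ Hq n * Real.exp (-(B * t)) := (hInv n).2 t ht
      _ ≤ Hs * Real.exp (-(B * t)) :=
          mul_le_mul_of_nonneg_right (hHle n) (Real.exp_pos _).le
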